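/- (Maximum length of the live list, Theorem 3.1.) Let m, k, l be natural numbers with 1 ≤ l ≤ k − 1 ≤ m − 1, and let 0 = i₀ < i₁ < ⋯ < i_l be a strictly increasing sequence of natural numbers with i_l ≤ m − k + l. Then the cardinality of the set {(j, t) : 1 ≤ j ≤ l, i_{j−1} < t < i_j} plus the cardinality of the set {t : i_l < t ≤ m − k + l} equals m − k. Consequently, when the LIFO node-selection rule and the minimum solution tree are used, the number of live nodes immediately after branching any node (the live nodes at levels 1, …, l together with the newly added non-leaf children of the branched node) is at most m − k, and this bound is attained. -/

import Mathlib

/-- (Maximum length of the live list, Theorem 3.1.)  Let `m, k, l` be natural numbers with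
`1 ≤ l ≤ k - 1 ≤ m - 1` (i.e. `1 ≤ l`, `l + 1 ≤ k`, `k ≤ m`), and let
`0 = i₀ < i₁ < ⋯ < i_l` be a strictly increasing sequence of naturals with
`i_l ≤ m - k + l`.  Then the number of pairs `(j, t)` with `1 ≤ j ≤ l` and
`i_{j-1} < t < i_j` (the live nodes at levels `1, …, l`), plus the number of `t` with
`i_l < t ≤ m - k + l` (the newly added non-leaf children of the branched node), equals
`m - k`.  Hence with the LIFO rule and the minimum solution tree the live list has at most
`m - k` nodes, and this bound is attained. -/
theorem live_list_length_eq (m k l : ℕ) (hl : 1 ≤ l) (hlk : l + 1 ≤ k) (hkm : k ≤ m)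
    (i : Fin (l + 1) → ℕ) (hmono : StrictMono i) (h0 : i 0 = 0)
    (hlast : i (Fin.last l) ≤ m - k + l) :
    Set.ncard {p : ℕ × ℕ | ∃ (h1 : 1 ≤ p.1) (h2 : p.1 ≤ l),
      i ⟨p.1 - 1, by omega⟩ < p.2 ∧ p.2 < i ⟨p.1, by omega⟩} +
    Set.ncard {t : ℕ | i (Fin.last l) < t ∧ t ≤ m - k + l} =
    m - k := by
  -- extend `i` to a strictly monotone function on all of ℕ
  set f : ℕ → ℕ := fun j => if h : j ≤ l then i ⟨j, by omega⟩ else i (Fin.last l) + (j - l)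
    with hf
  have hfeq : ∀ j (h : j ≤ l), f j = i ⟨j, by omega⟩ := by
    intro j h; simp [hf, h]
  have hfsucc : ∀ j, f j < f (j + 1) := by
    intro j
    by_cases h1 : j + 1 ≤ l
    · rw [hfeq j (by omega), hfeq (j+1) h1]
      exact hmono (by simp [Fin.lt_def])
    · by_cases h2 : j ≤ l
      · rw [hfeq j h2]
        simp only [hf, dif_neg h1]
        have hje : (⟨j, by omega⟩ : Fin (l + 1)) = Fin.last l := by
          ext; simp; omega
        rw [hje]
        omega
      · simp only [hf, dif_neg h1, dif_neg h2]
        omega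
  have hfmono : StrictMono f := strictMono_nat_of_lt_succ hfsucc
  have hfge : ∀ j, j ≤ f j := by
    intro j
    induction j with
    | zero => exact Nat.zero_le _
    | succ n ih => have := hfsucc n; omega
  -- the first set as a finset
  set T : Finset (ℕ × ℕ) :=
    (Finset.Icc 1 l).biUnion (fun j => (Finset.Ioo (f (j-1)) (f j)).image (fun t => (j, t)))
    with hT
  have hS : {p : ℕ × ℕ | ∃ (h1 : 1 ≤ p.1) (h2 : p.1 ≤ l),
      i ⟨p.1 - 1, by omega⟩ < p.2 ∧ p.2 < i ⟨p.1, by omega⟩} = ↑T := by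
    ext ⟨j, t⟩
    simp only [Set.mem_setOf_eq, hT, Finset.coe_biUnion, Finset.mem_coe, Finset.mem_Icc,
      Set.mem_iUnion, Finset.mem_image, Finset.mem_Ioo, Prod.mk.injEq]
    constructor
    · rintro ⟨h1, h2, ha, hb⟩
      refine ⟨j, ⟨h1, h2⟩, t, ⟨?_, ?_⟩, rfl, rfl⟩
      · rw [hfeq (j-1) (by omega)]; exact ha
      · rw [hfeq j h2]; exact hb
    · rintro ⟨j', ⟨h1, h2⟩, t', ⟨ha, hb⟩, rfl, rfl⟩
      refine ⟨h1, h2, ?_, ?_⟩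
      · rw [hfeq (j'-1) (by omega)] at ha; exact ha
      · rw [hfeq j' h2] at hb; exact hb
  have hTcard : T.card = ∑ j ∈ Finset.Icc 1 l, (f j - f (j-1) - 1) := by
    rw [hT, Finset.card_biUnion]
    · apply Finset.sum_congr rfl
      intro j _
      rw [Finset.card_image_of_injective _ (fun a b h => by simpa using h)]
      simp [Nat.card_Ioo]
    · intro a _ b _ hab
      simp only [Finset.disjoint_left, Finset.mem_image]
      rintro ⟨x, y⟩ ⟨u, _, hu⟩ ⟨v, _, hv⟩
      apply hab
      simp only [Prod.ext_iff] at hu hv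
      omega
  -- telescoping sum
  set g : ℕ → ℕ := fun j => f j - j with hg
  have hgmono : Monotone g := by
    intro a b hab
    induction b with
    | zero => simp_all
    | succ n ih =>
      rcases Nat.lt_or_ge a (n+1) with h | h
      · have := ih (by omega)
        have h2 := hfsucc n
        have h3 := hfge n
        simp only [hg] at *
        omega
      · have : a = n + 1 := by omega
        subst this; rfl
  have hsum : ∑ j ∈ Finset.Icc 1 l, (f j - f (j-1) - 1) = f l - l := by
    have h1 : ∑ j ∈ Finset.Icc 1 l, (f j - f (j-1) - 1)
        = ∑ j ∈ Finset.range l, (g (j+1) - g j) := by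
      have himg : Finset.Icc 1 l = Finset.image (· + 1) (Finset.range l) := by
        ext x
        simp only [Finset.mem_Icc, Finset.mem_image, Finset.mem_range]
        constructor
        · rintro ⟨h1, h2⟩; exact ⟨x - 1, by omega, by omega⟩
        · rintro ⟨a, ha, rfl⟩; omega
      rw [himg, Finset.sum_image (by intro a _ b _ h; simp only at h; omega)]
      apply Finset.sum_congr rfl
      intro j _
      have h2 := hfsucc j
      have h3 := hfge j
      simp only [hg, Nat.add_sub_cancel]
      omega
    rw [h1, Finset.sum_range_tsub hgmono]
    have hf0 : f 0 = 0 := by rw [hfeq 0 (by omega)]; exact h0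
    simp [hg, hf0]
  -- the second set
  have hS2 : {t : ℕ | i (Fin.last l) < t ∧ t ≤ m - k + l} = ↑(Finset.Ioc (i (Fin.last l)) (m - k + l)) := by
    ext t; simp
  have hfl : f l = i (Fin.last l) := by rw [hfeq l le_rfl]; rfl
  rw [hS, hS2, Set.ncard_coe_finset, Set.ncard_coe_finset, hTcard, hsum, Nat.card_Ioc, hfl]
  have := hfge l
  rw [hfl] at this
  omega
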